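/- arXiv:2508.19409 — 3 statements merged into one kernel-verified Lean document; each statement's English description precedes it below -/
import Mathlib

section
/- For any real matrices B ∈ ℝ^{n×m} (with the roles as in the Procrustes problem), the orthogonal matrix Q = UV^T, where B = UΣV^T is a singular value decomposition with U, V square orthogonal, minimizes ||QX - A||_F over all orthogonal Q whenever B = A X^T. Equivalently, for the orthogonal Procrustes problem min_{Q ∈ O(n)} ||QX - A||_F, an optimal Q is given by UV^T where UΣV^T is the SVD of A X^T. -/
open Matrix

/-- The Frobenius norm of a real matrix, `‖M‖_F = sqrt (trace (Mᵀ M))`. -/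
noncomputable def frobNorm {p q : ℕ} (M : Matrix (Fin p) (Fin q) ℝ) : ℝ :=
  Real.sqrt ((Mᵀ * M).trace)

/-- Expansion of the squared Frobenius norm of `Q X - A` for orthogonal `Q`. -/
lemma procrustes_expand {n m : ℕ} (X A : Matrix (Fin n) (Fin m) ℝ)
    (Q : Matrix (Fin n) (Fin n) ℝ) (hQ : Qᵀ * Q = 1) :
    ((Q * X - A)ᵀ * (Q * X - A)).trace
      = (Xᵀ * X).trace + (Aᵀ * A).trace - 2 * (Qᵀ * (A * Xᵀ)).trace := by
  have h1 : (Q * X - A)ᵀ * (Q * X - A)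
      = Xᵀ * X - Xᵀ * Qᵀ * A - Aᵀ * (Q * X) + Aᵀ * A := by
    rw [Matrix.transpose_sub, Matrix.transpose_mul, Matrix.sub_mul, Matrix.mul_sub,
      Matrix.mul_sub]
    rw [Matrix.mul_assoc Xᵀ Qᵀ (Q * X), ← Matrix.mul_assoc Qᵀ Q X, hQ, Matrix.one_mul]
    abel
  rw [h1]
  have h2 : (Aᵀ * (Q * X)).trace = (Xᵀ * Qᵀ * A).trace := by
    rw [← Matrix.trace_transpose (Aᵀ * (Q * X))]
    simp [Matrix.transpose_mul, Matrix.mul_assoc]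
  have h3 : (Xᵀ * Qᵀ * A).trace = (Qᵀ * (A * Xᵀ)).trace := by
    rw [Matrix.trace_mul_cycle, Matrix.trace_mul_comm Qᵀ (A * Xᵀ), Matrix.mul_assoc]
  simp only [Matrix.trace_add, Matrix.trace_sub, h2, h3]
  ring

/-- Orthogonal Procrustes: if `A Xᵀ = U Σ Vᵀ` is an SVD (with `U, V` orthogonal and
`Σ` diagonal with nonnegative entries), then `Q = U Vᵀ` minimizes `‖Q X - A‖_F`
over all orthogonal `Q`. -/
theorem procrustes_solution
    (n m : ℕ) (X A : Matrix (Fin n) (Fin m) ℝ)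
    (U V S : Matrix (Fin n) (Fin n) ℝ)
    (hU : Uᵀ * U = 1) (hV : Vᵀ * V = 1)
    (hSdiag : ∀ i j, i ≠ j → S i j = 0) (hSnonneg : ∀ i, 0 ≤ S i i)
    (hSVD : A * Xᵀ = U * S * Vᵀ) :
    ∀ Q : Matrix (Fin n) (Fin n) ℝ, Qᵀ * Q = 1 →
      frobNorm ((U * Vᵀ) * X - A) ≤ frobNorm (Q * X - A) := by
  intro Q hQ
  -- right-inverse versions
  have hU' : U * Uᵀ = 1 := mul_eq_one_comm.mp hU
  have hV' : V * Vᵀ = 1 := mul_eq_one_comm.mp hV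
  have hQ' : Q * Qᵀ = 1 := mul_eq_one_comm.mp hQ
  -- orthogonality of U Vᵀ
  have hUV : (U * Vᵀ)ᵀ * (U * Vᵀ) = 1 := by
    simp only [Matrix.transpose_mul, Matrix.transpose_transpose]
    calc V * Uᵀ * (U * Vᵀ) = V * (Uᵀ * U) * Vᵀ := by
          simp [Matrix.mul_assoc]
      _ = 1 := by rw [hU, Matrix.mul_one, hV']
  unfold frobNorm
  apply Real.sqrt_le_sqrt
  rw [procrustes_expand X A Q hQ, procrustes_expand X A (U * Vᵀ) hUV]
  have key : (Qᵀ * (A * Xᵀ)).trace ≤ ((U * Vᵀ)ᵀ * (A * Xᵀ)).trace := by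
    rw [hSVD]
    -- RHS equals trace S
    have hrhs : ((U * Vᵀ)ᵀ * (U * S * Vᵀ)).trace = S.trace := by
      have : (U * Vᵀ)ᵀ * (U * S * Vᵀ) = V * S * Vᵀ := by
        simp only [Matrix.transpose_mul, Matrix.transpose_transpose]
        calc V * Uᵀ * (U * S * Vᵀ) = V * ((Uᵀ * U) * (S * Vᵀ)) := by
              simp [Matrix.mul_assoc]
          _ = V * S * Vᵀ := by rw [hU]; simp [Matrix.mul_assoc]
      rw [this, Matrix.trace_mul_cycle, hV, Matrix.one_mul]
    rw [hrhs]
    -- LHS: let Z = Vᵀ Qᵀ U, then trace = trace (Z * S)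
    set Z := Vᵀ * (Qᵀ * U) with hZ
    have hlhs : (Qᵀ * (U * S * Vᵀ)).trace = (Z * S).trace := by
      have h4 : Qᵀ * (U * S * Vᵀ) = (Qᵀ * U) * S * Vᵀ := by simp [Matrix.mul_assoc]
      rw [h4, Matrix.trace_mul_cycle, hZ]
    rw [hlhs]
    -- Z is orthogonal
    have hZo : Zᵀ * Z = 1 := by
      simp only [hZ, Matrix.transpose_mul, Matrix.transpose_transpose]
      calc Uᵀ * Q * V * (Vᵀ * (Qᵀ * U))
          = Uᵀ * (Q * ((V * Vᵀ) * (Qᵀ * U))) := by simp [Matrix.mul_assoc]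
        _ = Uᵀ * (Q * (Qᵀ * U)) := by rw [hV']; simp
        _ = Uᵀ * U := by rw [← Matrix.mul_assoc Q Qᵀ U, hQ', Matrix.one_mul]
        _ = 1 := hU
    -- diagonal entries of Z are ≤ 1
    have hZii : ∀ i, Z i i ≤ 1 := by
      intro i
      have h1 : (Zᵀ * Z) i i = 1 := by rw [hZo]; simp [Matrix.one_apply]
      have h2 : (Zᵀ * Z) i i = ∑ j, Z j i * Z j i := by
        simp [Matrix.mul_apply, Matrix.transpose_apply]
      have h3 : Z i i * Z i i ≤ ∑ j, Z j i * Z j i := by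
        apply Finset.single_le_sum (f := fun j => Z j i * Z j i)
        · intro j _; exact mul_self_nonneg _
        · exact Finset.mem_univ i
      nlinarith [h1, h2, h3, sq_nonneg (Z i i - 1), sq_nonneg (Z i i + 1)]
    -- trace (Z * S) = ∑ Z i i * S i i ≤ ∑ S i i = trace S
    have htr : (Z * S).trace = ∑ i, Z i i * S i i := by
      rw [Matrix.trace]
      apply Finset.sum_congr rfl
      intro i _
      rw [Matrix.diag_apply, Matrix.mul_apply]
      rw [Finset.sum_eq_single i]
      · intro j _ hj; rw [hSdiag j i hj, mul_zero]
      · intro h; exact absurd (Finset.mem_univ i) h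
    rw [htr, Matrix.trace]
    apply Finset.sum_le_sum
    intro i _
    calc Z i i * S i i ≤ 1 * S i i := mul_le_mul_of_nonneg_right (hZii i) (hSnonneg i)
      _ = S i i := one_mul _
  linarith
end

section
/- Let M = UΣV^T be a singular value decomposition of an n×m real matrix with n ≤ m, and suppose the curve t ↦ M(t) is differentiable with M(0) = M and all singular values simple and positive. Then the derivative of the diagonal singular value matrix satisfies Σ'(0) = diag part of U^T M'(0) V; in particular σ_i'(0) = u_i^T M'(0) v_i where u_i, v_i are the i-th left and right singular vectors. -/
open Matrix

private lemma hasDerivAt_mul_entry {a b c : Type*} [Fintype b]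
    (A : ℝ → Matrix a b ℝ) (B : ℝ → Matrix b c ℝ)
    (A' : Matrix a b ℝ) (B' : Matrix b c ℝ)
    (hA : ∀ i j, HasDerivAt (fun t => A t i j) (A' i j) 0)
    (hB : ∀ i j, HasDerivAt (fun t => B t i j) (B' i j) 0) :
    ∀ i j, HasDerivAt (fun t => (A t * B t) i j) ((A' * B 0 + A 0 * B') i j) 0 := by
  intro i j
  have h : HasDerivAt (fun t => ∑ k, A t i k * B t k j)
      (∑ k, (A' i k * B 0 k j + A 0 i k * B' k j)) 0 :=
    HasDerivAt.fun_sum fun k _ => (hA i k).mul (hB k j)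
  simpa [Matrix.mul_apply, Matrix.add_apply, Finset.sum_add_distrib] using h

/-- Derivative of the singular values: if `M(t) = U(t) Σ(t) V(t)ᵀ` is a
differentiable (thin) SVD family of `n × m` matrices (`n ≤ m`) with simple
positive singular values at `t = 0`, then `Σ'(0)ᵢᵢ = (U(0)ᵀ M'(0) V(0))ᵢᵢ`,
i.e. `σᵢ'(0) = uᵢᵀ M'(0) vᵢ`. -/
theorem singular_value_derivative
    (n m : ℕ) (hnm : n ≤ m)
    (M : ℝ → Matrix (Fin n) (Fin m) ℝ)
    (U : ℝ → Matrix (Fin n) (Fin n) ℝ)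
    (S : ℝ → Matrix (Fin n) (Fin n) ℝ)
    (V : ℝ → Matrix (Fin m) (Fin n) ℝ)
    (M' : Matrix (Fin n) (Fin m) ℝ)
    (U' : Matrix (Fin n) (Fin n) ℝ)
    (S' : Matrix (Fin n) (Fin n) ℝ)
    (V' : Matrix (Fin m) (Fin n) ℝ)
    (hSVD : ∀ t, M t = U t * S t * (V t)ᵀ)
    (hUorth : ∀ t, (U t)ᵀ * U t = 1)
    (hVorth : ∀ t, (V t)ᵀ * V t = 1)
    (hSdiag : ∀ t i j, i ≠ j → S t i j = 0)
    (hpos : ∀ i, 0 < S 0 i i)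
    (hsimple : ∀ i j : Fin n, (i : ℕ) < (j : ℕ) → S 0 j j < S 0 i i)
    (hM' : ∀ i j, HasDerivAt (fun t => M t i j) (M' i j) 0)
    (hU' : ∀ i j, HasDerivAt (fun t => U t i j) (U' i j) 0)
    (hS' : ∀ i j, HasDerivAt (fun t => S t i j) (S' i j) 0)
    (hV' : ∀ i j, HasDerivAt (fun t => V t i j) (V' i j) 0) :
    ∀ i : Fin n, S' i i = ((U 0)ᵀ * M' * V 0) i i := by
  -- derivatives of transposes
  have hUT' : ∀ i j, HasDerivAt (fun t => (U t)ᵀ i j) (U'ᵀ i j) 0 := fun i j => hU' j i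
  have hVT' : ∀ i j, HasDerivAt (fun t => (V t)ᵀ i j) (V'ᵀ i j) 0 := fun i j => hV' j i
  -- derivative of U*S
  have hUS := hasDerivAt_mul_entry U S U' S' hU' hS'
  -- derivative of (U*S)*Vᵀ
  have hProd := hasDerivAt_mul_entry (fun t => U t * S t) (fun t => (V t)ᵀ)
    (U' * S 0 + U 0 * S') V'ᵀ hUS hVT'
  have hMeq : M' = (U' * S 0 + U 0 * S') * (V 0)ᵀ + (U 0 * S 0) * V'ᵀ := by
    ext i j
    have h1 : HasDerivAt (fun t => M t i j)
        (((U' * S 0 + U 0 * S') * (V 0)ᵀ + (U 0 * S 0) * V'ᵀ) i j) 0 := by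
      have := hProd i j
      simpa [hSVD] using this
    exact (hM' i j).unique h1
  -- skewness of Uᵀ U' and V'ᵀ V
  have hUskew : U'ᵀ * U 0 + (U 0)ᵀ * U' = 0 := by
    have h := hasDerivAt_mul_entry (fun t => (U t)ᵀ) U U'ᵀ U' hUT' hU'
    ext i j
    have h1 : HasDerivAt (fun t => ((U t)ᵀ * U t) i j) ((0 : Matrix (Fin n) (Fin n) ℝ) i j) 0 := by
      simp only [hUorth]
      simpa using hasDerivAt_const (0 : ℝ) ((1 : Matrix (Fin n) (Fin n) ℝ) i j)
    exact (h i j).unique h1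
  have hVskew : V'ᵀ * V 0 + (V 0)ᵀ * V' = 0 := by
    have h := hasDerivAt_mul_entry (fun t => (V t)ᵀ) V V'ᵀ V' hVT' hV'
    ext i j
    have h1 : HasDerivAt (fun t => ((V t)ᵀ * V t) i j) ((0 : Matrix (Fin n) (Fin n) ℝ) i j) 0 := by
      simp only [hVorth]
      simpa using hasDerivAt_const (0 : ℝ) ((1 : Matrix (Fin n) (Fin n) ℝ) i j)
    exact (h i j).unique h1
  -- diagonal of Uᵀ U' vanishes
  have hUdiag : ∀ i, ((U 0)ᵀ * U') i i = 0 := by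
    intro i
    have h := congrFun (congrFun hUskew i) i
    have hsym : (U'ᵀ * U 0) i i = ((U 0)ᵀ * U') i i := by
      simp [Matrix.mul_apply, Matrix.transpose_apply, mul_comm]
    simp only [Matrix.add_apply, Matrix.zero_apply, hsym] at h
    linarith
  have hVdiag : ∀ i, (V'ᵀ * V 0) i i = 0 := by
    intro i
    have h := congrFun (congrFun hVskew i) i
    have hsym : ((V 0)ᵀ * V') i i = (V'ᵀ * V 0) i i := by
      simp [Matrix.mul_apply, Matrix.transpose_apply, mul_comm]
    simp only [Matrix.add_apply, Matrix.zero_apply, hsym] at h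
    linarith
  -- main computation
  intro i
  have key : (U 0)ᵀ * M' * V 0 =
      ((U 0)ᵀ * U') * S 0 + S' + S 0 * (V'ᵀ * V 0) := by
    rw [hMeq]
    have hU0 := hUorth 0
    have hV0 := hVorth 0
    calc (U 0)ᵀ * ((U' * S 0 + U 0 * S') * (V 0)ᵀ + (U 0 * S 0) * V'ᵀ) * V 0
        = ((U 0)ᵀ * U') * S 0 * ((V 0)ᵀ * V 0) + ((U 0)ᵀ * U 0) * S' * ((V 0)ᵀ * V 0)
          + ((U 0)ᵀ * U 0) * S 0 * (V'ᵀ * V 0) := by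
          simp only [Matrix.add_mul, Matrix.mul_add, Matrix.mul_assoc]
      _ = ((U 0)ᵀ * U') * S 0 + S' + S 0 * (V'ᵀ * V 0) := by
          rw [hU0, hV0]; simp [Matrix.mul_assoc]
  rw [key]
  have h1 : (((U 0)ᵀ * U') * S 0) i i = ((U 0)ᵀ * U') i i * S 0 i i := by
    rw [Matrix.mul_apply]
    rw [Finset.sum_eq_single i]
    · intro b _ hb; rw [hSdiag 0 b i hb, mul_zero]
    · intro h; exact absurd (Finset.mem_univ i) h
  have h2 : (S 0 * (V'ᵀ * V 0)) i i = S 0 i i * (V'ᵀ * V 0) i i := by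
    rw [Matrix.mul_apply]
    rw [Finset.sum_eq_single i]
    · intro b _ hb; rw [hSdiag 0 i b (Ne.symm hb), zero_mul]
    · intro h; exact absurd (Finset.mem_univ i) h
  simp [Matrix.add_apply, h1, h2, hUdiag i, hVdiag i]
end

section
/- Orthogonal matrices of the Kronecker product form Q = Q_l ⊗ Q_r leave the rank of the permuted unfolding invariant: rank(A((Q_l ⊗ Q_r) X)) = rank(A(X)), where A is the reshaping map M ∘ P ∘ M^{-1} that regroups indices (l,r,b,c) → (l,c,r,b). -/
open Matrix Kronecker

/-- The reshaping map `A : ℝ^{lr×bc} → ℝ^{lc×rb}` regrouping tensor indices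
`(l,r,b,c) → (l,c,r,b)`. -/
def reshapeA (l r b c : ℕ) (X : Matrix (Fin l × Fin r) (Fin b × Fin c) ℝ) :
    Matrix (Fin l × Fin c) (Fin r × Fin b) ℝ :=
  Matrix.of fun p q => X (p.1, q.1) (q.2, p.2)

lemma reshapeA_factor (l r b c : ℕ)
    (Ql : Matrix (Fin l) (Fin l) ℝ) (Qr : Matrix (Fin r) (Fin r) ℝ)
    (X : Matrix (Fin l × Fin r) (Fin b × Fin c) ℝ) :
    reshapeA l r b c ((Ql ⊗ₖ Qr) * X)
      = (Ql ⊗ₖ (1 : Matrix (Fin c) (Fin c) ℝ)) * reshapeA l r b c X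
          * (Qr ⊗ₖ (1 : Matrix (Fin b) (Fin b) ℝ))ᵀ := by
  ext ⟨i, k⟩ ⟨j, m⟩
  simp only [reshapeA, Matrix.mul_apply, Matrix.transpose_apply, Matrix.of_apply,
    kroneckerMap_apply, Fintype.sum_prod_type, Matrix.one_apply]
  simp only [mul_ite, mul_one, mul_zero, ite_mul, zero_mul, Finset.sum_ite_eq',
    Finset.mem_univ, if_true]
  rw [Finset.sum_comm]
  congr 1
  ext j'
  simp only [ite_mul, zero_mul, Finset.sum_ite_eq, Finset.sum_ite_eq', Finset.mem_univ,
    if_true]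
  rw [Finset.sum_mul]
  exact Finset.sum_congr rfl fun i' _ => by ring

lemma isUnit_det_of_orth {n : ℕ} (Q : Matrix (Fin n) (Fin n) ℝ) (h : Qᵀ * Q = 1) :
    IsUnit Q.det := by
  have := congrArg Matrix.det h
  rw [Matrix.det_mul, Matrix.det_transpose, Matrix.det_one] at this
  exact IsUnit.of_mul_eq_one _ this

/-- Orthogonal gauge transformations of Kronecker product form
`Q = Q_l ⊗ Q_r` leave the rank of the permuted unfolding invariant:
`rank (A((Q_l ⊗ Q_r) X)) = rank (A X)`. -/
theorem kronecker_gauge_rank_invariant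
    (l r b c : ℕ)
    (Ql : Matrix (Fin l) (Fin l) ℝ) (Qr : Matrix (Fin r) (Fin r) ℝ)
    (hQl : Qlᵀ * Ql = 1) (hQr : Qrᵀ * Qr = 1)
    (X : Matrix (Fin l × Fin r) (Fin b × Fin c) ℝ) :
    (reshapeA l r b c ((Ql ⊗ₖ Qr) * X)).rank = (reshapeA l r b c X).rank := by
  rw [reshapeA_factor]
  rw [Matrix.rank_mul_eq_left_of_isUnit_det, Matrix.rank_mul_eq_right_of_isUnit_det]
  · rw [Matrix.det_kronecker, Matrix.det_one]
    exact ((isUnit_det_of_orth Ql hQl).pow _).mul (isUnit_one.pow _)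
  · rw [Matrix.det_transpose, Matrix.det_kronecker, Matrix.det_one]
    exact ((isUnit_det_of_orth Qr hQr).pow _).mul (isUnit_one.pow _)
end
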